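/- A bipartite ordered process W ∈ L(A_I ⊗ A_O ⊗ B_I) without quantum memory (i.e., W = ρ_SEP^{A_I aux} * D^{aux A_O → B_I} with ρ_SEP separable across A_I|aux) is a direct-cause process, and conversely every direct-cause process arises this way. -/

import Mathlib

open Matrix ComplexOrder

lemma sum3_comm {α β γ M : Type*} [Fintype α] [Fintype β] [Fintype γ]
    [AddCommMonoid M] (f : α → β → γ → M) :
    ∑ x : α, ∑ y : β, ∑ k : γ, f x y k = ∑ k : γ, ∑ x : α, ∑ y : β, f x y k := by
  calc ∑ x : α, ∑ y : β, ∑ k : γ, f x y k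
      = ∑ x : α, ∑ k : γ, ∑ y : β, f x y k :=
        Finset.sum_congr rfl fun _ _ => Finset.sum_comm
    _ = ∑ k : γ, ∑ x : α, ∑ y : β, f x y k := Finset.sum_comm

lemma sum4_comm {α β γ δ M : Type*} [Fintype α] [Fintype β] [Fintype γ] [Fintype δ]
    [AddCommMonoid M] (f : α → β → γ → δ → M) :
    ∑ x : α, ∑ y : β, ∑ j : γ, ∑ r : δ, f x y j r
      = ∑ j : γ, ∑ r : δ, ∑ y : β, ∑ x : α, f x y j r := by
  calc ∑ x : α, ∑ y : β, ∑ j : γ, ∑ r : δ, f x y j r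
      = ∑ x : α, ∑ j : γ, ∑ y : β, ∑ r : δ, f x y j r :=
        Finset.sum_congr rfl fun _ _ => Finset.sum_comm
    _ = ∑ j : γ, ∑ x : α, ∑ y : β, ∑ r : δ, f x y j r := Finset.sum_comm
    _ = ∑ j : γ, ∑ x : α, ∑ r : δ, ∑ y : β, f x y j r :=
        Finset.sum_congr rfl fun _ _ => Finset.sum_congr rfl fun _ _ => Finset.sum_comm
    _ = ∑ j : γ, ∑ r : δ, ∑ x : α, ∑ y : β, f x y j r :=
        Finset.sum_congr rfl fun _ _ => Finset.sum_comm
    _ = ∑ j : γ, ∑ r : δ, ∑ y : β, ∑ x : α, f x y j r :=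
        Finset.sum_congr rfl fun _ _ => Finset.sum_congr rfl fun _ _ => Finset.sum_comm

lemma psd_eq_conjTranspose_mul_self {α : Type*} [Fintype α] {A : Matrix α α ℂ}
    (hA : A.PosSemidef) : ∃ B : Matrix α α ℂ, A = Bᴴ * B := by
  classical
  open scoped MatrixOrder in
  obtain ⟨B, hB⟩ := CStarAlgebra.nonneg_iff_eq_star_mul_self.mp hA.nonneg
  exact ⟨B, by rw [hB, star_eq_conjTranspose]⟩

/-- Contraction of a PSD matrix `D` on `α × κ` with a PSD matrix `σ` on `α` is PSD. -/
lemma contract_psd {α κ : Type*} [Fintype α] [Fintype κ] [DecidableEq κ]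
    (σ : Matrix α α ℂ) (D : Matrix (α × κ) (α × κ) ℂ)
    (hσ : σ.PosSemidef) (hD : D.PosSemidef) :
    (Matrix.of fun s t : κ => ∑ x, ∑ y, σ y x * D (y, s) (x, t)).PosSemidef := by
  obtain ⟨B, hB⟩ := psd_eq_conjTranspose_mul_self hσ
  obtain ⟨F, hF⟩ := psd_eq_conjTranspose_mul_self hD
  set G : Matrix (α × (α × κ)) κ ℂ :=
    Matrix.of fun (p : α × (α × κ)) (t : κ) => ∑ y, B p.1 y * F p.2 (y, t) with hG
  have key : (Matrix.of fun s t : κ => ∑ x, ∑ y, σ y x * D (y, s) (x, t))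
      = Gᴴ * G := by
    ext s t
    have hterm : ∀ (x y : α), σ y x * D (y, s) (x, t)
        = ∑ j : α, ∑ r : α × κ,
            (star (B j y) * star (F r (y, s))) * (B j x * F r (x, t)) := by
      intro x y
      rw [hB, hF]
      simp only [Matrix.mul_apply, Matrix.conjTranspose_apply, Finset.sum_mul,
        Finset.mul_sum]
      rw [Finset.sum_comm]
      exact Finset.sum_congr rfl fun j _ => Finset.sum_congr rfl fun r _ => by ring
    have hterm2 : ∀ (j : α) (r : α × κ),
        star (∑ y, B j y * F r (y, s)) * (∑ x, B j x * F r (x, t))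
          = ∑ y, ∑ x, (star (B j y) * star (F r (y, s))) * (B j x * F r (x, t)) := by
      intro j r
      rw [star_sum, Finset.sum_mul]
      refine Finset.sum_congr rfl fun y _ => ?_
      rw [Finset.mul_sum]
      exact Finset.sum_congr rfl fun x _ => by rw [star_mul']
    have hrhs : (Gᴴ * G) s t = ∑ p : α × (α × κ), star (G p s) * G p t := by
      simp [Matrix.mul_apply, Matrix.conjTranspose_apply]
    rw [Matrix.of_apply, hrhs, Fintype.sum_prod_type]
    simp only [hterm, hG, Matrix.of_apply, hterm2]
    exact sum4_comm _
  rw [key]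
  exact Matrix.posSemidef_conjTranspose_mul_self _

/-- A block-diagonal matrix with PSD blocks is PSD. -/
lemma blockdiag_psd {α κ : Type*} [Fintype α] [DecidableEq α] [Fintype κ] [DecidableEq κ]
    (Ds : α → Matrix κ κ ℂ) (hDs : ∀ x, (Ds x).PosSemidef) :
    (Matrix.of fun p q : α × κ =>
      if p.1 = q.1 then Ds q.1 p.2 q.2 else 0).PosSemidef := by
  choose F hF using fun x => psd_eq_conjTranspose_mul_self (hDs x)
  set G : Matrix (α × κ) (α × κ) ℂ :=
    Matrix.of fun p q : α × κ => if p.1 = q.1 then F q.1 p.2 q.2 else 0 with hG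
  have key : (Matrix.of fun p q : α × κ =>
        if p.1 = q.1 then Ds q.1 p.2 q.2 else 0) = Gᴴ * G := by
    ext ⟨y, s⟩ ⟨x, t⟩
    have hrhs : (Gᴴ * G) (y, s) (x, t)
        = ∑ z : α, ∑ r : κ, star (G (z, r) (y, s)) * G (z, r) (x, t) := by
      rw [Matrix.mul_apply, Fintype.sum_prod_type]
      exact Finset.sum_congr rfl fun z _ => Finset.sum_congr rfl fun r _ => by
        rw [Matrix.conjTranspose_apply]
    rw [hrhs]
    simp only [hG, Matrix.of_apply]
    by_cases h : y = x
    · subst h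
      rw [if_pos rfl]
      rw [Finset.sum_eq_single y]
      · rw [hF y, Matrix.mul_apply]
        refine Finset.sum_congr rfl fun r _ => ?_
        rw [Matrix.conjTranspose_apply]
        simp
      · intro z _ hz
        apply Finset.sum_eq_zero
        intro r _
        simp [hz]
      · intro h; simp at h
    · rw [if_neg h]
      symm
      apply Finset.sum_eq_zero
      intro z _
      apply Finset.sum_eq_zero
      intro r _
      by_cases hzy : z = y
      · subst hzy
        simp [h]
      · simp [hzy]
  rw [key]
  exact Matrix.posSemidef_conjTranspose_mul_self _

theorem stmt_14 (nI nO nB : ℕ)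
    (W : Matrix (Fin nI × Fin nO × Fin nB) (Fin nI × Fin nO × Fin nB) ℂ) :
    (∃ (na m : ℕ) (w : Fin m → ℝ)
       (ρs : Fin m → Matrix (Fin nI) (Fin nI) ℂ)
       (σs : Fin m → Matrix (Fin na) (Fin na) ℂ)
       (D : Matrix (Fin na × Fin nO × Fin nB) (Fin na × Fin nO × Fin nB) ℂ),
       (∀ k, 0 ≤ w k) ∧ (∑ k, w k) = 1 ∧
       (∀ k, (ρs k).PosSemidef) ∧ (∀ k, (ρs k).trace = 1) ∧
       (∀ k, (σs k).PosSemidef) ∧ (∀ k, (σs k).trace = 1) ∧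
       D.PosSemidef ∧
       (∀ x a x' a', (∑ b : Fin nB, D (x, a, b) (x', a', b))
          = if (x, a) = (x', a') then 1 else 0) ∧
       W = Matrix.of fun p q : Fin nI × Fin nO × Fin nB =>
         ∑ x : Fin na, ∑ y : Fin na,
           (∑ k, (w k : ℂ) * ρs k p.1 q.1 * σs k y x) *
             D (y, p.2.1, p.2.2) (x, q.2.1, q.2.2))
    ↔
    (∃ (m : ℕ) (w : Fin m → ℝ) (ρs : Fin m → Matrix (Fin nI) (Fin nI) ℂ)
       (Ds : Fin m → Matrix (Fin nO × Fin nB) (Fin nO × Fin nB) ℂ),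
       (∀ k, 0 ≤ w k) ∧ (∑ k, w k) = 1 ∧
       (∀ k, (ρs k).PosSemidef) ∧ (∀ k, (ρs k).trace = 1) ∧
       (∀ k, (Ds k).PosSemidef) ∧
       (∀ k a a', (∑ b : Fin nB, Ds k (a, b) (a', b)) = if a = a' then 1 else 0) ∧
       W = ∑ k, (w k : ℂ) • Matrix.of fun p q : Fin nI × Fin nO × Fin nB =>
         ρs k p.1 q.1 * Ds k p.2 q.2) := by
  constructor
  · rintro ⟨na, m, w, ρs, σs, D, hw, hw1, hρ, hρ1, hσ, hσ1, hD, hD1, hW⟩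
    refine ⟨m, w, ρs,
      fun k => Matrix.of fun s t : Fin nO × Fin nB =>
        ∑ x, ∑ y, σs k y x * D (y, s) (x, t),
      hw, hw1, hρ, hρ1, fun k => contract_psd (σs k) D (hσ k) hD, ?_, ?_⟩
    · intro k a a'
      show (∑ b : Fin nB, ∑ x, ∑ y, σs k y x * D (y, a, b) (x, a', b)) = _
      rw [Finset.sum_comm]
      have step : ∀ x : Fin na, (∑ b : Fin nB, ∑ y : Fin na,
          σs k y x * D (y, a, b) (x, a', b))
          = ∑ y : Fin na, σs k y x * (if (y, a) = (x, a') then 1 else 0) := by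
        intro x
        rw [Finset.sum_comm]
        refine Finset.sum_congr rfl fun y _ => ?_
        rw [← Finset.mul_sum, hD1]
      simp only [step]
      have step2 : ∀ x : Fin na,
          (∑ y : Fin na, σs k y x * (if (y, a) = (x, a') then 1 else 0))
          = if a = a' then σs k x x else 0 := by
        intro x
        by_cases h : a = a'
        · subst h
          rw [if_pos rfl, Finset.sum_eq_single x]
          · simp
          · intro y _ hy; simp [Prod.ext_iff, hy]
          · intro h; simp at h
        · rw [if_neg h]
          apply Finset.sum_eq_zero
          intro y _
          simp [Prod.ext_iff, h]
      simp only [step2]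
      by_cases h : a = a'
      · subst h
        simp only [if_pos rfl, Finset.sum_ite_eq]
        have := hσ1 k
        simpa [Matrix.trace, Matrix.diag] using this
      · simp [h]
    · rw [hW]
      ext p q
      simp only [Matrix.of_apply, Matrix.sum_apply, Matrix.smul_apply, smul_eq_mul]
      calc ∑ x : Fin na, ∑ y : Fin na,
              (∑ k, (w k : ℂ) * ρs k p.1 q.1 * σs k y x) *
                D (y, p.2.1, p.2.2) (x, q.2.1, q.2.2)
          = ∑ x : Fin na, ∑ y : Fin na, ∑ k,
              ((w k : ℂ) * ρs k p.1 q.1) *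
                (σs k y x * D (y, p.2.1, p.2.2) (x, q.2.1, q.2.2)) := by
            refine Finset.sum_congr rfl fun x _ => Finset.sum_congr rfl fun y _ => ?_
            rw [Finset.sum_mul]
            exact Finset.sum_congr rfl fun k _ => by ring
        _ = ∑ k, ∑ x : Fin na, ∑ y : Fin na,
              ((w k : ℂ) * ρs k p.1 q.1) *
                (σs k y x * D (y, p.2.1, p.2.2) (x, q.2.1, q.2.2)) := sum3_comm _
        _ = _ := by
            refine Finset.sum_congr rfl fun k _ => ?_
            simp only [← Finset.mul_sum]
            rw [mul_assoc]
  · rintro ⟨m, w, ρs, Ds, hw, hw1, hρ, hρ1, hDs, hDs1, hW⟩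
    classical
    refine ⟨m, m, w, ρs,
      fun k => Matrix.of fun y x : Fin m => if y = k ∧ x = k then 1 else 0,
      Matrix.of fun p q : Fin m × Fin nO × Fin nB =>
        if p.1 = q.1 then Ds q.1 p.2 q.2 else 0,
      hw, hw1, hρ, hρ1, ?_, ?_, ?_, ?_, ?_⟩
    · intro k
      refine Matrix.PosSemidef.of_dotProduct_mulVec_nonneg ?_ ?_
      · ext y x
        simp only [Matrix.conjTranspose_apply, Matrix.of_apply]
        by_cases h1 : y = k <;> by_cases h2 : x = k <;> simp [h1, h2, and_comm]
      · intro v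
        have hmv : (Matrix.of fun y x : Fin m => if y = k ∧ x = k then (1:ℂ) else 0) *ᵥ v
            = fun y => if y = k then v k else 0 := by
          ext y
          simp only [Matrix.mulVec, Matrix.of_apply, dotProduct, ite_mul, one_mul, zero_mul]
          by_cases h : y = k <;> simp [h]
        rw [hmv]
        simp only [dotProduct, Pi.star_apply, mul_ite, mul_zero]
        rw [Finset.sum_eq_single k]
        · simp only [if_pos rfl]
          exact star_mul_self_nonneg (v k)
        · intro b _ hb; simp [hb]
        · intro h; simp at h
    · intro k
      simp [Matrix.trace, Matrix.diag]
    · exact blockdiag_psd Ds hDs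
    · intro x a x' a'
      simp only [Matrix.of_apply]
      by_cases h : x = x'
      · subst h
        simp only [if_pos rfl, Prod.mk.injEq, true_and]
        rw [← hDs1 x a a']
        rfl
      · simp [h, Prod.ext_iff]
    · rw [hW]
      ext p q
      simp only [Matrix.of_apply, Matrix.sum_apply, Matrix.smul_apply, smul_eq_mul]
      have inner : ∀ x : Fin m,
          (∑ y : Fin m, (∑ k, (w k : ℂ) * ρs k p.1 q.1 *
              (if y = k ∧ x = k then 1 else 0)) *
            (if y = x then Ds x (p.2.1, p.2.2) (q.2.1, q.2.2) else 0))
          = (w x : ℂ) * ρs x p.1 q.1 * Ds x (p.2.1, p.2.2) (q.2.1, q.2.2) := by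
        intro x
        rw [Finset.sum_eq_single x]
        · rw [if_pos rfl]
          congr 1
          rw [Finset.sum_eq_single x]
          · simp
          · intro b _ hb; simp [Ne.symm hb]
          · intro h; simp at h
        · intro y _ hy; simp [hy]
        · intro h; simp at h
      symm
      calc ∑ x : Fin m, ∑ y : Fin m,
              (∑ k, (w k : ℂ) * ρs k p.1 q.1 *
                (if y = k ∧ x = k then 1 else 0)) *
              (if y = x then Ds x (p.2.1, p.2.2) (q.2.1, q.2.2) else 0)
          = ∑ x : Fin m, (w x : ℂ) * ρs x p.1 q.1 * Ds x (p.2.1, p.2.2) (q.2.1, q.2.2) :=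
            Finset.sum_congr rfl fun x _ => inner x
        _ = _ := Finset.sum_congr rfl fun k _ => by ring
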